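/- Let M be a matroid on ground set E. Define a 2-matroid Z(M) on carrier U = {ė, ē : e ∈ E} with skew classes ω_e = {ė, ē}, and rank r(Ȧ ∪ B̄) = r_M(A) + r_{M*}(B) for disjoint A, B ⊆ E, where M* is the dual matroid. Then Z(M) is a multimatroid (i.e., r satisfies axioms R1 and R2), its bases are exactly the transversals Ḃ ∪ (E−B)‾ for B a basis of M, and its circuits are exactly the sets Ċ for C a circuit of M together with the sets C̄ for C a cocircuit of M. -/

import Mathlib

open Finset

variable {U ι : Type}

section Defs
variable [DecidableEq U] [Fintype U] [DecidableEq ι] [Fintype ι]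

/-- `S` is a subtransversal: it meets each skew class at most once.
Skew classes are the fibers of `cls : U → ι`. -/
def Subtransversal (cls : U → ι) (S : Finset U) : Prop :=
  Set.InjOn cls ↑S

/-- The skew class with index `i`, as a finset. -/
def skewClass (cls : U → ι) (i : ι) : Finset U :=
  Finset.univ.filter (fun x => cls x = i)

/-- `T` is a transversal: it meets each skew class exactly once. -/
def Transversal (cls : U → ι) (T : Finset U) : Prop :=
  Subtransversal cls T ∧ ∀ i : ι, ∃ x ∈ T, cls x = i

/-- The multimatroid rank axioms for a rank function `r` on the carrier given by
`cls : U → ι` (whose fibers, assumed nonempty, are the skew classes).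
The first three fields express axiom (R1) (each transversal carries a matroid),
and `axiomR2` is axiom (R2). -/
structure IsMultimatroid (cls : U → ι) (r : Finset U → ℕ) : Prop where
  cls_surj : Function.Surjective cls
  rank_le_card : ∀ S, Subtransversal cls S → r S ≤ S.card
  mono : ∀ S T, Subtransversal cls T → S ⊆ T → r S ≤ r T
  submod : ∀ S T, Subtransversal cls (S ∪ T) → r (S ∪ T) + r (S ∩ T) ≤ r S + r T
  axiomR2 : ∀ S, ∀ x y : U, Subtransversal cls S → cls x = cls y → x ≠ y →
    (∀ u ∈ S, cls u ≠ cls x) →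
    2 * r S + 1 ≤ r (insert x S) + r (insert y S)

/-- An independent set of the multimatroid. -/
def Indep (cls : U → ι) (r : Finset U → ℕ) (S : Finset U) : Prop :=
  Subtransversal cls S ∧ r S = S.card

/-- A basis: a maximal independent subtransversal. -/
def MMBasis (cls : U → ι) (r : Finset U → ℕ) (B : Finset U) : Prop :=
  Indep cls r B ∧ ∀ S, Indep cls r S → B ⊆ S → S = B

/-- A circuit: a minimal dependent subtransversal. -/
def Circuit (cls : U → ι) (r : Finset U → ℕ) (C : Finset U) : Prop :=
  Subtransversal cls C ∧ r C < C.card ∧ ∀ D ⊂ C, ¬ r D < D.card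

/-- Non-degenerate: every skew class has at least two elements. -/
def Nondegenerate (cls : U → ι) : Prop :=
  ∀ i : ι, 2 ≤ (skewClass cls i).card

/-- An element is singular if its singleton has rank `0`. -/
def Singular (r : Finset U → ℕ) (e : U) : Prop := r {e} = 0

end Defs

section Order
variable [DecidableEq U] [Fintype U] [DecidableEq ι] [Fintype ι] [LinearOrder ι]

/-- The skew class `i` is active with respect to the transversal `T` (in
particular, with respect to a basis): there is a circuit `C` with
`C − ω_i ⊆ T` whose `≺`-least element lies in the class `i`. -/
def Active (cls : U → ι) (r : Finset U → ℕ) (T : Finset U) (i : ι) : Prop :=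
  ∃ C, Circuit cls r C ∧ C \ skewClass cls i ⊆ T ∧
    ∃ m ∈ C, cls m = i ∧ ∀ x ∈ C, i ≤ cls x

end Order

variable {α : Type} [DecidableEq α] [Fintype α]

/-- Matroid rank axioms on the ground set given by the whole finite type `α`. -/
structure IsMatroidRank (r : Finset α → ℕ) : Prop where
  rank_le_card : ∀ S : Finset α, r S ≤ S.card
  mono : ∀ ⦃S T : Finset α⦄, S ⊆ T → r S ≤ r T
  submod : ∀ S T : Finset α, r (S ∪ T) + r (S ∩ T) ≤ r S + r T

/-- The rank function of the dual matroid: `r*(B) = |B| − r(E) + r(E − B)`. -/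
def dualRank (r : Finset α → ℕ) (B : Finset α) : ℕ :=
  B.card + r (Finset.univ \ B) - r Finset.univ

/-- A basis of the matroid: an independent set of full rank. -/
def MBase (r : Finset α → ℕ) (B : Finset α) : Prop :=
  r B = B.card ∧ r B = r Finset.univ

/-- A circuit of the matroid: a minimal dependent set. -/
def MCircuit (r : Finset α → ℕ) (C : Finset α) : Prop :=
  r C < C.card ∧ ∀ D ⊂ C, ¬ r D < D.card

/-- The rank function of the 2-matroid `Z(M)` on `U = {ė, ē : e ∈ E}` (encoded as
`α × Bool`, with `ė = (e, true)`, `ē = (e, false)` and skew classes the fibers of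
`Prod.fst`): `r(Ȧ ∪ B̄) = r_M(A) + r_{M*}(B)`. -/
def zRank (r : Finset α → ℕ) (S : Finset (α × Bool)) : ℕ :=
  r ((S.filter (fun p => p.2 = true)).image Prod.fst)
    + dualRank r ((S.filter (fun p => p.2 = false)).image Prod.fst)


set_option linter.unusedSectionVars false

section Aux19
namespace Z19
variable {α : Type} [DecidableEq α] [Fintype α]
variable (r : Finset α → ℕ)

lemma r_empty (hr : IsMatroidRank r) : r ∅ = 0 :=
  Nat.le_zero.mp (by simpa using hr.rank_le_card ∅)

lemma runiv_le (hr : IsMatroidRank r) (B : Finset α) :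
    r Finset.univ ≤ B.card + r (Finset.univ \ B) := by
  have h1 : B ∪ (Finset.univ \ B) = Finset.univ :=
    Finset.union_sdiff_of_subset (Finset.subset_univ B)
  have h2 := hr.submod B (Finset.univ \ B)
  rw [h1] at h2
  have h3 := hr.rank_le_card B
  omega

lemma dual_add (hr : IsMatroidRank r) (B : Finset α) :
    dualRank r B + r Finset.univ = B.card + r (Finset.univ \ B) := by
  unfold dualRank
  have := runiv_le r hr B
  omega

lemma dual_isMatroidRank (hr : IsMatroidRank r) : IsMatroidRank (dualRank r) := by
  constructor
  · intro S
    have h1 := dual_add r hr S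
    have h2 : r (Finset.univ \ S) ≤ r Finset.univ := hr.mono (Finset.sdiff_subset)
    omega
  · intro S T hST
    have h1 := dual_add r hr S
    have h2 := dual_add r hr T
    have hu : (Finset.univ \ T) ∪ (T \ S) = Finset.univ \ S := by
      ext x
      simp only [Finset.mem_union, Finset.mem_sdiff, Finset.mem_univ, true_and]
      constructor
      · rintro (h | ⟨h1, h2⟩)
        · exact fun hx => h (hST hx)
        · exact h2
      · intro h
        by_cases hx : x ∈ T
        · exact Or.inr ⟨hx, h⟩
        · exact Or.inl hx
    have hsub := hr.submod (Finset.univ \ T) (T \ S)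
    rw [hu] at hsub
    have hc1 : r (T \ S) ≤ (T \ S).card := hr.rank_le_card _
    have hc2 : (T \ S).card + S.card = T.card := by
      rw [Finset.card_sdiff_of_subset hST]
      have := Finset.card_le_card hST
      omega
    omega
  · intro S T
    have h1 := dual_add r hr S
    have h2 := dual_add r hr T
    have h3 := dual_add r hr (S ∪ T)
    have h4 := dual_add r hr (S ∩ T)
    have hu1 : Finset.univ \ (S ∪ T) = (Finset.univ \ S) ∩ (Finset.univ \ T) := by
      ext x; simp only [Finset.mem_sdiff, Finset.mem_union, Finset.mem_inter,
        Finset.mem_univ, true_and]; tauto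
    have hu2 : Finset.univ \ (S ∩ T) = (Finset.univ \ S) ∪ (Finset.univ \ T) := by
      ext x; simp only [Finset.mem_sdiff, Finset.mem_union, Finset.mem_inter,
        Finset.mem_univ, true_and]; tauto
    have hsub := hr.submod (Finset.univ \ S) (Finset.univ \ T)
    rw [← hu1, ← hu2] at hsub
    have hcard := Finset.card_union_add_card_inter S T
    omega

lemma cross (hr : IsMatroidRank r) {A B : Finset α} {a : α} (haA : a ∉ A) (haB : a ∉ B)
    (hAB : ∀ x ∈ A, x ∉ B) :
    r A + dualRank r B + 1 ≤ r (insert a A) + dualRank r (insert a B) := by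
  have h1 := dual_add r hr B
  have h2 := dual_add r hr (insert a B)
  have hcard : (insert a B).card = B.card + 1 := Finset.card_insert_of_notMem haB
  have hXY : (insert a A) ∪ (Finset.univ \ insert a B) = Finset.univ \ B := by
    ext x
    have hx := hAB x
    by_cases hxa : x = a
    · subst hxa; simp [haB]
    · simp only [Finset.mem_union, Finset.mem_insert, Finset.mem_sdiff, Finset.mem_univ,
        true_and, hxa, false_or]
      tauto
  have hXY2 : (insert a A) ∩ (Finset.univ \ insert a B) = A := by
    ext x
    have hx := hAB x
    by_cases hxa : x = a
    · subst hxa; simp [haA]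
    · simp only [Finset.mem_inter, Finset.mem_insert, Finset.mem_sdiff, Finset.mem_univ,
        true_and, hxa, false_or]
      tauto
  have hsub := hr.submod (insert a A) (Finset.univ \ insert a B)
  rw [hXY, hXY2] at hsub
  omega

/-! Projections -/

def pT (S : Finset (α × Bool)) : Finset α := (S.filter (fun p => p.2 = true)).image Prod.fst
def pF (S : Finset (α × Bool)) : Finset α := (S.filter (fun p => p.2 = false)).image Prod.fst

lemma mem_pT {S : Finset (α × Bool)} {a : α} : a ∈ pT S ↔ (a, true) ∈ S := by
  simp only [pT, Finset.mem_image, Finset.mem_filter]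
  constructor
  · rintro ⟨⟨x, b⟩, ⟨hx, hb⟩, rfl⟩
    cases b
    · simp at hb
    · exact hx
  · intro h; exact ⟨(a, true), ⟨h, rfl⟩, rfl⟩

lemma mem_pF {S : Finset (α × Bool)} {a : α} : a ∈ pF S ↔ (a, false) ∈ S := by
  simp only [pF, Finset.mem_image, Finset.mem_filter]
  constructor
  · rintro ⟨⟨x, b⟩, ⟨hx, hb⟩, rfl⟩
    cases b
    · exact hx
    · simp at hb
  · intro h; exact ⟨(a, false), ⟨h, rfl⟩, rfl⟩

lemma zRank_eq (S : Finset (α × Bool)) : zRank r S = r (pT S) + dualRank r (pF S) := rfl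

lemma card_split (S : Finset (α × Bool)) : (pT S).card + (pF S).card = S.card := by
  have h1 : (pT S).card = (S.filter (fun p => p.2 = true)).card := by
    apply Finset.card_image_of_injOn
    intro p hp q hq h
    simp only [Finset.coe_filter, Set.mem_setOf_eq] at hp hq
    exact Prod.ext h (hp.2.trans hq.2.symm)
  have h2 : (pF S).card = (S.filter (fun p => p.2 = false)).card := by
    apply Finset.card_image_of_injOn
    intro p hp q hq h
    simp only [Finset.coe_filter, Set.mem_setOf_eq] at hp hq
    exact Prod.ext h (hp.2.trans hq.2.symm)
  rw [h1, h2]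
  have h3 : S.filter (fun p => p.2 = false) = S.filter (fun p => ¬ p.2 = true) := by
    ext p; simp [Bool.not_eq_true]
  rw [h3, Finset.card_filter_add_card_filter_not]

lemma zRank_le_card (hr : IsMatroidRank r) (S : Finset (α × Bool)) : zRank r S ≤ S.card := by
  have h1 := hr.rank_le_card (pT S)
  have h2 := (dual_isMatroidRank r hr).rank_le_card (pF S)
  have h3 := card_split S
  rw [zRank_eq]
  omega

lemma pT_mono {S T : Finset (α × Bool)} (h : S ⊆ T) : pT S ⊆ pT T := by
  intro a ha; rw [mem_pT] at *; exact h ha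

lemma pF_mono {S T : Finset (α × Bool)} (h : S ⊆ T) : pF S ⊆ pF T := by
  intro a ha; rw [mem_pF] at *; exact h ha

lemma zRank_mono (hr : IsMatroidRank r) {S T : Finset (α × Bool)} (h : S ⊆ T) :
    zRank r S ≤ zRank r T := by
  rw [zRank_eq, zRank_eq]
  exact Nat.add_le_add (hr.mono (pT_mono h)) ((dual_isMatroidRank r hr).mono (pF_mono h))

lemma pT_union (S T : Finset (α × Bool)) : pT (S ∪ T) = pT S ∪ pT T := by
  ext a; simp [mem_pT, Finset.mem_union]

lemma pF_union (S T : Finset (α × Bool)) : pF (S ∪ T) = pF S ∪ pF T := by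
  ext a; simp [mem_pF, Finset.mem_union]

lemma pT_inter (S T : Finset (α × Bool)) : pT (S ∩ T) = pT S ∩ pT T := by
  ext a; simp [mem_pT, Finset.mem_inter]

lemma pF_inter (S T : Finset (α × Bool)) : pF (S ∩ T) = pF S ∩ pF T := by
  ext a; simp [mem_pF, Finset.mem_inter]

lemma zRank_submod (hr : IsMatroidRank r) (S T : Finset (α × Bool)) :
    zRank r (S ∪ T) + zRank r (S ∩ T) ≤ zRank r S + zRank r T := by
  have h1 := hr.submod (pT S) (pT T)
  have h2 := (dual_isMatroidRank r hr).submod (pF S) (pF T)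
  rw [zRank_eq, zRank_eq, zRank_eq, zRank_eq, pT_union, pF_union, pT_inter, pF_inter]
  omega

lemma subtrans_iff {S : Finset (α × Bool)} :
    Subtransversal (Prod.fst : α × Bool → α) S ↔
      ∀ a : α, ¬((a, true) ∈ S ∧ (a, false) ∈ S) := by
  constructor
  · rintro h a ⟨h1, h2⟩
    have := h (Finset.mem_coe.mpr h1) (Finset.mem_coe.mpr h2) rfl
    simp at this
  · rintro h ⟨a, b⟩ hp ⟨c, d⟩ hq hpq
    simp only [Finset.mem_coe] at hp hq
    simp only at hpq
    subst hpq
    cases b <;> cases d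
    · rfl
    · exact absurd ⟨hq, hp⟩ (h a)
    · exact absurd ⟨hp, hq⟩ (h a)
    · rfl

lemma pT_insert_true (a : α) (S : Finset (α × Bool)) :
    pT (insert (a, true) S) = insert a (pT S) := by
  ext x; simp [mem_pT, Finset.mem_insert, Prod.ext_iff]

lemma pF_insert_true (a : α) (S : Finset (α × Bool)) :
    pF (insert (a, true) S) = pF S := by
  ext x; simp [mem_pF, Finset.mem_insert, Prod.ext_iff]

lemma pT_insert_false (a : α) (S : Finset (α × Bool)) :
    pT (insert (a, false) S) = pT S := by
  ext x; simp [mem_pT, Finset.mem_insert, Prod.ext_iff]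

lemma pF_insert_false (a : α) (S : Finset (α × Bool)) :
    pF (insert (a, false) S) = insert a (pF S) := by
  ext x; simp [mem_pF, Finset.mem_insert, Prod.ext_iff]

lemma zR2 (hr : IsMatroidRank r) (S : Finset (α × Bool)) (x y : α × Bool)
    (hS : Subtransversal (Prod.fst : α × Bool → α) S) (hxy : x.1 = y.1) (hne : x ≠ y)
    (hnew : ∀ u ∈ S, u.1 ≠ x.1) :
    2 * zRank r S + 1 ≤ zRank r (insert x S) + zRank r (insert y S) := by
  obtain ⟨a, b⟩ := x
  obtain ⟨c, d⟩ := y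
  simp only at hxy
  subst hxy
  have haT : a ∉ pT S := by
    rw [mem_pT]; intro h; exact hnew _ h rfl
  have haF : a ∉ pF S := by
    rw [mem_pF]; intro h; exact hnew _ h rfl
  have hdisj : ∀ e ∈ pT S, e ∉ pF S := by
    intro e h1 h2
    rw [mem_pT] at h1; rw [mem_pF] at h2
    exact (subtrans_iff.mp hS) e ⟨h1, h2⟩
  have key := cross r hr haT haF hdisj
  have hbd : b ≠ d := by intro h; exact hne (by rw [h])
  cases b <;> cases d
  · exact absurd rfl hbd
  · rw [zRank_eq, zRank_eq, zRank_eq, pT_insert_true, pF_insert_true,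
      pT_insert_false, pF_insert_false]
    omega
  · rw [zRank_eq, zRank_eq, zRank_eq, pT_insert_true, pF_insert_true,
      pT_insert_false, pF_insert_false]
    omega
  · exact absurd rfl hbd

lemma dual_empty (hr : IsMatroidRank r) : dualRank r (∅ : Finset α) = 0 := by
  have := dual_add r hr (∅ : Finset α)
  simp at this
  omega

lemma mem_image_true {B : Finset α} {p : α × Bool} :
    p ∈ B.image (fun e => (e, true)) ↔ p.1 ∈ B ∧ p.2 = true := by
  obtain ⟨a, b⟩ := p
  simp only [Finset.mem_image, Prod.ext_iff]
  aesop

lemma mem_image_false {B : Finset α} {p : α × Bool} :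
    p ∈ B.image (fun e => (e, false)) ↔ p.1 ∈ B ∧ p.2 = false := by
  obtain ⟨a, b⟩ := p
  simp only [Finset.mem_image, Prod.ext_iff]
  aesop

lemma pT_image_true (B : Finset α) : pT (B.image (fun e => (e, true))) = B := by
  ext a; rw [mem_pT, mem_image_true]; simp

lemma pF_image_true (B : Finset α) : pF (B.image (fun e => (e, true))) = ∅ := by
  ext a; rw [mem_pF, mem_image_true]; simp

lemma pT_image_false (B : Finset α) : pT (B.image (fun e => (e, false))) = ∅ := by
  ext a; rw [mem_pT, mem_image_false]; simp

lemma pF_image_false (B : Finset α) : pF (B.image (fun e => (e, false))) = B := by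
  ext a; rw [mem_pF, mem_image_false]; simp

lemma indep_iff (hr : IsMatroidRank r) {S : Finset (α × Bool)} :
    Indep (Prod.fst : α × Bool → α) (zRank r) S ↔
      Subtransversal (Prod.fst : α × Bool → α) S ∧
        r (pT S) = (pT S).card ∧ dualRank r (pF S) = (pF S).card := by
  have h1 := hr.rank_le_card (pT S)
  have h2 := (dual_isMatroidRank r hr).rank_le_card (pF S)
  have h3 := card_split S
  unfold Indep
  rw [zRank_eq]
  constructor
  · rintro ⟨hs, he⟩
    exact ⟨hs, by omega, by omega⟩
  · rintro ⟨hs, ha, hb⟩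
    exact ⟨hs, by omega⟩

lemma subtrans_card_le (S : Finset (α × Bool))
    (hS : Subtransversal (Prod.fst : α × Bool → α) S) : S.card ≤ Fintype.card α := by
  have h1 := card_split S
  have hdisj : Disjoint (pT S) (pF S) := by
    rw [Finset.disjoint_left]
    intro a h1 h2
    rw [mem_pT] at h1; rw [mem_pF] at h2
    exact (subtrans_iff.mp hS) a ⟨h1, h2⟩
  have h2 : (pT S ∪ pF S).card = (pT S).card + (pF S).card :=
    Finset.card_union_of_disjoint hdisj
  have h3 : (pT S ∪ pF S).card ≤ Fintype.card α := by
    simpa using Finset.card_le_card (Finset.subset_univ (pT S ∪ pF S))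
  omega

lemma subtrans_insert {S : Finset (α × Bool)}
    (h : Subtransversal (Prod.fst : α × Bool → α) S) {p : α × Bool}
    (hp : ∀ q ∈ S, q.1 ≠ p.1) : Subtransversal (Prod.fst : α × Bool → α) (insert p S) := by
  rw [subtrans_iff] at h ⊢
  rintro a ⟨h1, h2⟩
  rw [Finset.mem_insert] at h1 h2
  rcases h1 with h1 | h1 <;> rcases h2 with h2 | h2
  · rw [← h2] at h1; simp at h1
  · exact hp _ h2 (by rw [← h1])
  · exact hp _ h1 (by rw [← h2])
  · exact h a ⟨h1, h2⟩

/-- The basis characterization. -/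
lemma basis_iff (hr : IsMatroidRank r) (B2 : Finset (α × Bool)) :
    MMBasis (Prod.fst : α × Bool → α) (zRank r) B2 ↔
      ∃ B : Finset α, MBase r B ∧
        B2 = B.image (fun e => (e, true)) ∪ Bᶜ.image (fun e => (e, false)) := by
  constructor
  · rintro ⟨hi, hmax⟩
    obtain ⟨hsub, hcT, hcF⟩ := (indep_iff r hr).mp hi
    -- B2 is full: every class is met
    have hfull : ∀ a : α, (a, true) ∈ B2 ∨ (a, false) ∈ B2 := by
      intro a
      by_contra hcon
      push_neg at hcon
      obtain ⟨hT, hF⟩ := hcon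
      have hnew : ∀ q ∈ B2, q.1 ≠ a := by
        rintro ⟨c, d⟩ hq rfl
        cases d
        · exact hF hq
        · exact hT hq
      have hkey := zR2 r hr B2 (a, true) (a, false) hsub rfl (by simp) hnew
      have hcard := (indep_iff r hr).mp hi
      have hind : zRank r B2 = B2.card := hi.2
      have hle1 := zRank_le_card r hr (insert (a, true) B2)
      have hle2 := zRank_le_card r hr (insert (a, false) B2)
      have hc1 : (insert (a, true) B2).card = B2.card + 1 :=
        Finset.card_insert_of_notMem hT
      have hc2 : (insert (a, false) B2).card = B2.card + 1 :=
        Finset.card_insert_of_notMem hF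
      have hst1 : Subtransversal (Prod.fst : α × Bool → α) (insert (a, true) B2) :=
        subtrans_insert hsub hnew
      have hst2 : Subtransversal (Prod.fst : α × Bool → α) (insert (a, false) B2) :=
        subtrans_insert hsub hnew
      have : zRank r (insert (a, true) B2) = (insert (a, true) B2).card ∨
          zRank r (insert (a, false) B2) = (insert (a, false) B2).card := by omega
      rcases this with h | h
      · have := hmax _ ⟨hst1, h⟩ (Finset.subset_insert _ _)
        rw [← this] at hT
        exact hT (Finset.mem_insert_self _ _)
      · have := hmax _ ⟨hst2, h⟩ (Finset.subset_insert _ _)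
        rw [← this] at hF
        exact hF (Finset.mem_insert_self _ _)
    refine ⟨pT B2, ?_, ?_⟩
    · -- MBase
      have hcompl : pF B2 = (pT B2)ᶜ := by
        ext a
        rw [mem_pF, Finset.mem_compl, mem_pT]
        constructor
        · intro h1 h2
          exact (subtrans_iff.mp hsub) a ⟨h2, h1⟩
        · intro h1
          rcases hfull a with h | h
          · exact absurd h h1
          · exact h
      have hd := dual_add r hr (pF B2)
      have huc : Finset.univ \ pF B2 = pT B2 := by
        rw [hcompl]
        simp [Finset.sdiff_eq_inter_compl]
      rw [huc] at hd
      exact ⟨hcT, by omega⟩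
    · -- shape
      ext ⟨a, b⟩
      cases b
      · constructor
        · intro h
          rw [Finset.mem_union, mem_image_false]
          refine Or.inr ⟨?_, rfl⟩
          rw [Finset.mem_compl, mem_pT]
          intro h2
          exact (subtrans_iff.mp hsub) a ⟨h2, h⟩
        · intro h
          rw [Finset.mem_union, mem_image_true, mem_image_false] at h
          simp only [Finset.mem_compl] at h
          rcases h with ⟨_, h⟩ | ⟨h, _⟩
          · simp at h
          · rw [mem_pT] at h
            rcases hfull a with h' | h'
            · exact absurd h' h
            · exact h'
      · constructor
        · intro h
          rw [Finset.mem_union, mem_image_true]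
          exact Or.inl ⟨mem_pT.mpr h, rfl⟩
        · intro h
          rw [Finset.mem_union, mem_image_true, mem_image_false] at h
          rcases h with ⟨h, _⟩ | ⟨_, h⟩
          · exact mem_pT.mp h
          · simp at h
  · rintro ⟨B, ⟨hB1, hB2⟩, rfl⟩
    set B2 := B.image (fun e => (e, true)) ∪ Bᶜ.image (fun e => (e, false)) with hB2def
    have hpT : pT B2 = B := by
      ext a
      rw [mem_pT, hB2def, Finset.mem_union, mem_image_true, mem_image_false]
      simp
    have hpF : pF B2 = Bᶜ := by
      ext a
      rw [mem_pF, hB2def, Finset.mem_union, mem_image_true, mem_image_false]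
      simp
    have hsub : Subtransversal (Prod.fst : α × Bool → α) B2 := by
      rw [subtrans_iff]
      rintro a ⟨h1, h2⟩
      rw [← mem_pT, hpT] at h1
      rw [← mem_pF, hpF, Finset.mem_compl] at h2
      exact h2 h1
    have hd := dual_add r hr (pF B2)
    have huc : Finset.univ \ pF B2 = B := by
      rw [hpF]
      simp [Finset.sdiff_eq_inter_compl]
    rw [huc, hpF] at hd
    have hcF : dualRank r Bᶜ = Bᶜ.card := by omega
    have hind : Indep (Prod.fst : α × Bool → α) (zRank r) B2 := by
      rw [indep_iff r hr]
      exact ⟨hsub, by rw [hpT]; exact hB1, by rw [hpF]; exact hcF⟩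
    refine ⟨hind, ?_⟩
    intro S hS hsubset
    have hcard : B2.card = Fintype.card α := by
      have := card_split B2
      rw [hpT, hpF] at this
      have := Finset.card_add_card_compl B
      omega
    have hle := subtrans_card_le S hS.1
    exact Finset.eq_of_subset_of_card_le hsubset (by omega) |>.symm

lemma all_true_eq_image {S : Finset (α × Bool)} (h : pF S = ∅) :
    S = (pT S).image (fun e => (e, true)) := by
  ext ⟨a, b⟩
  rw [mem_image_true]
  cases b
  · simp only [Bool.false_eq_true, and_false, iff_false]
    intro hmem
    have : a ∈ pF S := mem_pF.mpr hmem
    rw [h] at this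
    simp at this
  · simp only [and_true]
    exact mem_pT.symm

lemma all_false_eq_image {S : Finset (α × Bool)} (h : pT S = ∅) :
    S = (pF S).image (fun e => (e, false)) := by
  ext ⟨a, b⟩
  rw [mem_image_false]
  cases b
  · simp only [and_true]
    exact mem_pF.symm
  · simp only [Bool.true_eq_false, and_false, iff_false]
    intro hmem
    have : a ∈ pT S := mem_pT.mpr hmem
    rw [h] at this
    simp at this

lemma zRank_image_true (hr : IsMatroidRank r) (C : Finset α) :
    zRank r (C.image (fun e => (e, true))) = r C := by
  rw [zRank_eq, pT_image_true, pF_image_true, dual_empty r hr]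
  omega

lemma zRank_image_false (hr : IsMatroidRank r) (C : Finset α) :
    zRank r (C.image (fun e => (e, false))) = dualRank r C := by
  rw [zRank_eq, pT_image_false, pF_image_false, r_empty r hr]
  omega

lemma card_image_true (C : Finset α) : (C.image (fun e => (e, true))).card = C.card :=
  Finset.card_image_of_injective _ (fun a b h => by simpa using h)

lemma card_image_false (C : Finset α) : (C.image (fun e => (e, false))).card = C.card :=
  Finset.card_image_of_injective _ (fun a b h => by simpa using h)

lemma subtrans_image_true (C : Finset α) :
    Subtransversal (Prod.fst : α × Bool → α) (C.image (fun e => (e, true))) := by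
  rw [subtrans_iff]
  rintro a ⟨_, h2⟩
  rw [mem_image_true] at h2
  simp at h2

lemma subtrans_image_false (C : Finset α) :
    Subtransversal (Prod.fst : α × Bool → α) (C.image (fun e => (e, false))) := by
  rw [subtrans_iff]
  rintro a ⟨h1, _⟩
  rw [mem_image_false] at h1
  simp at h1

/-- Circuits of the form `Ċ` for `C` a circuit of the primal. -/
lemma circuit_image_true (hr : IsMatroidRank r) {C : Finset α} (hC : MCircuit r C) :
    Circuit (Prod.fst : α × Bool → α) (zRank r) (C.image (fun e => (e, true))) := by
  refine ⟨subtrans_image_true C, ?_, ?_⟩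
  · rw [zRank_image_true r hr, card_image_true]
    exact hC.1
  · intro D hD hcon
    have hDsub : D ⊆ C.image (fun e => (e, true)) := hD.subset
    have hpFD : pF D = ∅ := by
      ext a
      simp only [Finset.notMem_empty, iff_false]
      intro h
      have := hDsub (mem_pF.mp h)
      rw [mem_image_true] at this
      simp at this
    have hDeq := all_true_eq_image hpFD
    have hcardD : D.card = (pT D).card := by
      have := card_split D
      rw [hpFD] at this
      simp at this
      omega
    have hsubC : pT D ⊂ C := by
      rw [Finset.ssubset_iff_subset_ne]
      constructor
      · intro a ha
        have := hDsub (mem_pT.mp ha)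
        rw [mem_image_true] at this
        exact this.1
      · intro h
        have hc := Finset.card_lt_card hD
        rw [card_image_true, hcardD, h] at hc
        exact lt_irrefl _ hc
    have := hC.2 _ hsubC
    rw [zRank_eq, hpFD, dual_empty r hr] at hcon
    have hle := hr.rank_le_card (pT D)
    omega

/-- Circuits of the form `C̄` for `C` a cocircuit. -/
lemma circuit_image_false (hr : IsMatroidRank r) {C : Finset α}
    (hC : MCircuit (dualRank r) C) :
    Circuit (Prod.fst : α × Bool → α) (zRank r) (C.image (fun e => (e, false))) := by
  refine ⟨subtrans_image_false C, ?_, ?_⟩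
  · rw [zRank_image_false r hr, card_image_false]
    exact hC.1
  · intro D hD hcon
    have hDsub : D ⊆ C.image (fun e => (e, false)) := hD.subset
    have hpTD : pT D = ∅ := by
      ext a
      simp only [Finset.notMem_empty, iff_false]
      intro h
      have := hDsub (mem_pT.mp h)
      rw [mem_image_false] at this
      simp at this
    have hcardD : D.card = (pF D).card := by
      have := card_split D
      rw [hpTD] at this
      simp at this
      omega
    have hsubC : pF D ⊂ C := by
      rw [Finset.ssubset_iff_subset_ne]
      constructor
      · intro a ha
        have := hDsub (mem_pF.mp ha)
        rw [mem_image_false] at this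
        exact this.1
      · intro h
        have hc := Finset.card_lt_card hD
        rw [card_image_false, hcardD, h] at hc
        exact lt_irrefl _ hc
    have := hC.2 _ hsubC
    rw [zRank_eq, hpTD, r_empty r hr] at hcon
    have hle := (dual_isMatroidRank r hr).rank_le_card (pF D)
    omega

lemma circuit_iff (hr : IsMatroidRank r) (C2 : Finset (α × Bool)) :
    Circuit (Prod.fst : α × Bool → α) (zRank r) C2 ↔
      ((∃ C : Finset α, MCircuit r C ∧ C2 = C.image (fun e => (e, true))) ∨
        (∃ C : Finset α, MCircuit (dualRank r) C ∧
          C2 = C.image (fun e => (e, false)))) := by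
  constructor
  · rintro ⟨hsub, hdep, hmin⟩
    -- C2 is pure: pT C2 = ∅ or pF C2 = ∅
    have hpure : pT C2 = ∅ ∨ pF C2 = ∅ := by
      by_contra hcon
      push_neg at hcon
      obtain ⟨hT, hF⟩ := hcon
      obtain ⟨aT, haT⟩ := hT
      obtain ⟨aF, haF⟩ := hF
      -- the true part is a proper subset
      set ST := C2.filter (fun p => p.2 = true) with hSTdef
      set SF := C2.filter (fun p => p.2 = false) with hSFdef
      have hpTST : pT ST = pT C2 := by
        ext x
        rw [mem_pT, mem_pT, hSTdef, Finset.mem_filter]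
        simp
      have hpFST : pF ST = ∅ := by
        ext x
        rw [mem_pF, hSTdef, Finset.mem_filter]
        simp
      have hpTSF : pT SF = ∅ := by
        ext x
        rw [mem_pT, hSFdef, Finset.mem_filter]
        simp
      have hpFSF : pF SF = pF C2 := by
        ext x
        rw [mem_pF, mem_pF, hSFdef, Finset.mem_filter]
        simp
      have hST : ST ⊂ C2 := by
        rw [Finset.ssubset_iff_subset_ne]
        refine ⟨Finset.filter_subset _ _, ?_⟩
        intro h
        have : (aF, false) ∈ ST := by rw [h]; exact mem_pF.mp haF
        rw [hSTdef, Finset.mem_filter] at this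
        simp at this
      have hSF : SF ⊂ C2 := by
        rw [Finset.ssubset_iff_subset_ne]
        refine ⟨Finset.filter_subset _ _, ?_⟩
        intro h
        have : (aT, true) ∈ SF := by rw [h]; exact mem_pT.mp haT
        rw [hSFdef, Finset.mem_filter] at this
        simp at this
      have h1 := hmin _ hST
      have h2 := hmin _ hSF
      have hcST := card_split ST
      have hcSF := card_split SF
      rw [hpTST, hpFST] at hcST
      rw [hpTSF, hpFSF] at hcSF
      simp at hcST hcSF
      rw [zRank_eq, hpTST, hpFST, dual_empty r hr] at h1
      rw [zRank_eq, hpTSF, hpFSF, r_empty r hr] at h2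
      have hleT := hr.rank_le_card (pT C2)
      have hleF := (dual_isMatroidRank r hr).rank_le_card (pF C2)
      have hcC2 := card_split C2
      rw [zRank_eq] at hdep
      omega
    rcases hpure with h | h
    · refine Or.inr ⟨pF C2, ?_, all_false_eq_image h⟩
      have heq := all_false_eq_image h
      constructor
      · rw [zRank_eq, h, r_empty r hr] at hdep
        have := card_split C2
        rw [h] at this
        simp at this
        omega
      · intro D hD hcon
        have hDC2 : D.image (fun e => (e, false)) ⊂ C2 := by
          rw [heq, Finset.ssubset_iff_subset_ne]
          constructor
          · exact Finset.image_subset_image hD.subset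
          · intro hcontra
            have hcc : D.card = (pF C2).card := by
              rw [← card_image_false D, ← card_image_false (pF C2), hcontra]
            exact absurd hcc (Finset.card_lt_card hD).ne
        have := hmin _ hDC2
        rw [zRank_image_false r hr, card_image_false] at this
        exact this hcon
    · refine Or.inl ⟨pT C2, ?_, all_true_eq_image h⟩
      have heq := all_true_eq_image h
      constructor
      · rw [zRank_eq, h, dual_empty r hr] at hdep
        have := card_split C2
        rw [h] at this
        simp at this
        omega
      · intro D hD hcon
        have hDC2 : D.image (fun e => (e, true)) ⊂ C2 := by
          rw [heq, Finset.ssubset_iff_subset_ne]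
          constructor
          · exact Finset.image_subset_image hD.subset
          · intro hcontra
            have hcc : D.card = (pT C2).card := by
              rw [← card_image_true D, ← card_image_true (pT C2), hcontra]
            exact absurd hcc (Finset.card_lt_card hD).ne
        have := hmin _ hDC2
        rw [zRank_image_true r hr, card_image_true] at this
        exact this hcon
  · rintro (⟨C, hC, rfl⟩ | ⟨C, hC, rfl⟩)
    · exact circuit_image_true r hr hC
    · exact circuit_image_false r hr hC

end Z19
end Aux19

/-- `Z(M)` is a multimatroid; its bases are exactly the transversals
`Ḃ ∪ (E−B)‾` for `B` a basis of `M`; its circuits are exactly the sets `Ċ` for `C`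
a circuit of `M` together with the sets `C̄` for `C` a cocircuit of `M`. -/
theorem stmt_19 (r : Finset α → ℕ) (hr : IsMatroidRank r) :
    IsMultimatroid (Prod.fst : α × Bool → α) (zRank r) ∧
    (∀ B2 : Finset (α × Bool), MMBasis (Prod.fst : α × Bool → α) (zRank r) B2 ↔
      ∃ B : Finset α, MBase r B ∧
        B2 = B.image (fun e => (e, true)) ∪ Bᶜ.image (fun e => (e, false))) ∧
    (∀ C2 : Finset (α × Bool), Circuit (Prod.fst : α × Bool → α) (zRank r) C2 ↔
      ((∃ C : Finset α, MCircuit r C ∧ C2 = C.image (fun e => (e, true))) ∨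
        (∃ C : Finset α, MCircuit (dualRank r) C ∧
          C2 = C.image (fun e => (e, false))))) := by
  refine ⟨?_, Z19.basis_iff r hr, Z19.circuit_iff r hr⟩
  constructor
  · intro a; exact ⟨(a, true), rfl⟩
  · intro S _; exact Z19.zRank_le_card r hr S
  · intro S T _ h; exact Z19.zRank_mono r hr h
  · intro S T _; exact Z19.zRank_submod r hr S T
  · intro S x y hS hxy hne hnew
    have := Z19.zR2 r hr S x y hS hxy hne (fun u hu => hnew u hu)
    omega
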